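/- Let ǧᵢ ⊂ gl_n(C) be the Lie subalgebra of matrices whose i-th row is zero. Then ǧᵢ is a Frobenius Lie algebra, i.e. its index is 0: there exists a linear functional ξ on ǧᵢ such that the skew form (x,y) ↦ ξ([x,y]) is nondegenerate on ǧᵢ. -/

import Mathlib

/-- The Lie subalgebra of `gl_n(ℂ)` of matrices with zero `i`-th row is Frobenius:
there is a linear functional `ξ` such that `(x,y) ↦ ξ⁅x,y⁆` is nondegenerate on it. -/
theorem stmt16 (n : ℕ) (i : Fin n) :
    ∃ ξ : Matrix (Fin n) (Fin n) ℂ →ₗ[ℂ] ℂ,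
      ∀ x : Matrix (Fin n) (Fin n) ℂ, (∀ j, x i j = 0) →
        (∀ y : Matrix (Fin n) (Fin n) ℂ, (∀ j, y i j = 0) → ξ (x * y - y * x) = 0) →
        x = 0 := by
  obtain ⟨m, rfl⟩ : ∃ m, n = m + 1 := ⟨n - 1, by have := i.pos; omega⟩
  refine ⟨{ toFun := fun z => ∑ t : Fin (m+1), if t = i then 0 else z t (t - 1),
            map_add' := ?_, map_smul' := ?_ }, ?_⟩
  · intro z w
    rw [← Finset.sum_add_distrib]
    exact Finset.sum_congr rfl fun t _ => by split_ifs <;> simp [Matrix.add_apply]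
  · intro c z
    beta_reduce
    rw [RingHom.id_apply, smul_eq_mul, Finset.mul_sum]
    exact Finset.sum_congr rfl fun t _ => by split_ifs <;> simp [Matrix.smul_apply]
  intro x hx hxy
  -- The key relations, from testing against elementary matrices E_{k,l} with k ≠ i.
  have key : ∀ l k : Fin (m+1), k ≠ i →
      (if l + 1 = i then 0 else x (l + 1) k) = x l (k - 1) := by
    intro l k hk
    have h := hxy (Matrix.single k l 1)
      (by intro j; simp only [Matrix.single, Matrix.of_apply]; rw [if_neg]; exact fun hc => hk hc.1)
    simp only [LinearMap.coe_mk, AddHom.coe_mk, Matrix.sub_apply] at h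
    have h1 : ∀ t : Fin (m+1),
        ((x * Matrix.single k l 1 : Matrix (Fin (m+1)) (Fin (m+1)) ℂ)) t (t - 1)
          = if t = l + 1 then x t k else 0 := by
      intro t
      rw [Matrix.mul_apply]
      rcases eq_or_ne t (l + 1) with rfl | ht
      · rw [if_pos rfl, Finset.sum_eq_single k]
        · have : l + 1 - 1 = l := by abel
          simp [Matrix.single, this]
        · intro b _ hb
          have : l + 1 - 1 = l := by abel
          simp [Matrix.single, this, hb, Ne.symm hb]
        · simp
      · rw [if_neg ht]
        apply Finset.sum_eq_zero
        intro b _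
        have hne : l ≠ t - 1 := by
          intro hc
          exact ht (by rw [hc]; abel)
        simp [Matrix.single, hne]
    have h2 : ∀ t : Fin (m+1),
        ((Matrix.single k l 1 * x : Matrix (Fin (m+1)) (Fin (m+1)) ℂ)) t (t - 1)
          = if t = k then x l (t - 1) else 0 := by
      intro t
      rw [Matrix.mul_apply]
      rcases eq_or_ne t k with rfl | ht
      · rw [if_pos rfl, Finset.sum_eq_single l]
        · simp [Matrix.single]
        · intro b _ hb; simp [Matrix.single, Ne.symm hb]
        · simp
      · rw [if_neg ht]
        apply Finset.sum_eq_zero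
        intro b _
        simp [Matrix.single, Ne.symm ht]
    have hsum : ∀ t : Fin (m+1),
        (if t = i then 0 else
            ((x * Matrix.single k l 1 : Matrix (Fin (m+1)) (Fin (m+1)) ℂ)) t (t - 1)
            - ((Matrix.single k l 1 * x : Matrix (Fin (m+1)) (Fin (m+1)) ℂ)) t (t - 1))
          = (if t = i then 0 else if t = l + 1 then x t k else 0)
            - (if t = i then 0 else if t = k then x l (t - 1) else 0) := by
      intro t
      rcases eq_or_ne t i with rfl | ht
      · simp
      · simp [ht, h1 t, h2 t]
    rw [Finset.sum_congr rfl fun t _ => hsum t, Finset.sum_sub_distrib] at h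
    have e1 : (∑ t : Fin (m+1), if t = i then 0 else if t = l + 1 then x t k else 0)
        = if l + 1 = i then 0 else x (l + 1) k := by
      rw [Finset.sum_eq_single (l + 1)]
      · split_ifs <;> simp_all
      · intro b _ hb; simp [hb]
      · simp
    have e2 : (∑ t : Fin (m+1), if t = i then 0 else if t = k then x l (t - 1) else 0)
        = x l (k - 1) := by
      rw [Finset.sum_eq_single k]
      · simp [hk]
      · intro b _ hb; simp [hb]
      · simp
    rw [e1, e2] at h
    exact sub_eq_zero.mp h
  -- going up the diagonal chain until the row hits `i`
  have up : ∀ s : ℕ, ∀ a b : Fin (m+1), (i - a).val = s + 1 → s + 1 ≤ (i - b - 1).val →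
      x a b = 0 := by
    intro s
    induction s with
    | zero =>
      intro a b ha hb
      have hbne : b + 1 ≠ i := by
        intro hc
        have h0 : i - b - 1 = 0 := by rw [← hc]; abel
        rw [h0] at hb; simp at hb
      have hai : a + 1 = i := by
        have hm1 : (1 : ℕ) < m + 1 := by have := (i - a).isLt; omega
        have h1 : i - a = 1 := by
          apply Fin.ext
          rw [ha, Fin.val_one', Nat.mod_eq_of_lt hm1]
        have := sub_eq_iff_eq_add.mp h1
        rw [this]; abel
      have h := key a (b + 1) hbne
      rw [if_pos hai] at h
      have hb1 : b + 1 - 1 = b := by abel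
      rw [hb1] at h
      exact h.symm
    | succ s ih =>
      intro a b ha hb
      have hia : i - a ≠ 0 := by intro hc; rw [hc] at ha; simp at ha
      have hib1 : i - b - 1 ≠ 0 := by intro hc; rw [hc] at hb; simp at hb
      have hbne : b + 1 ≠ i := by
        intro hc
        apply hib1; rw [← hc]; abel
      have hane : a + 1 ≠ i := by
        intro hc
        have h1 : i - a = 1 := by rw [← hc]; abel
        have hm1 : (1 : ℕ) < m + 1 := by have := (i - a).isLt; omega
        rw [h1, Fin.val_one', Nat.mod_eq_of_lt hm1] at ha
        omega
      have h := key a (b + 1) hbne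
      rw [if_neg hane] at h
      have hb1 : b + 1 - 1 = b := by abel
      rw [hb1] at h
      have hrec : x (a + 1) (b + 1) = 0 := by
        apply ih
        · have h1 : i - (a + 1) = (i - a) - 1 := by abel
          rw [h1, Fin.coe_sub_one, if_neg hia, ha]
          omega
        · have h1 : i - (b + 1) - 1 = (i - b - 1) - 1 := by abel
          rw [h1, Fin.coe_sub_one, if_neg hib1]
          omega
      rw [← h]
      exact hrec
  -- main induction: go down the diagonal chain until the row hits `i`
  have main : ∀ t : ℕ, ∀ a b : Fin (m+1), (a - i).val = t → x a b = 0 := by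
    intro t
    induction t using Nat.strong_induction_on with
    | _ t ih =>
    intro a b hab
    by_cases hai : a = i
    · rw [hai]; exact hx b
    have hne : a - i ≠ 0 := fun hc => hai (sub_eq_zero.mp hc)
    by_cases hbi : b = i
    · have hs : (i - a).val ≠ 0 := by
        intro hc
        exact hai (sub_eq_zero.mp (Fin.ext hc)).symm
      rw [hbi]
      refine up ((i - a).val - 1) a i (by omega) ?_
      have hneg : i - i - 1 = (-1 : Fin (m+1)) := by abel
      have hm1 : ((-1 : Fin (m+1))).val = m := by simp
      rw [hneg, hm1]
      have := (i - a).isLt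
      omega
    · have h := key (a - 1) b hbi
      have ha1 : a - 1 + 1 = a := by abel
      rw [ha1, if_neg hai] at h
      rw [h]
      have hv : (a - i).val ≠ 0 := fun hc => hne (Fin.ext hc)
      apply ih ((a - 1 - i).val) _ _ _ rfl
      have h1 : a - 1 - i = (a - i) - 1 := by abel
      rw [h1, Fin.coe_sub_one, if_neg hne]
      omega
  ext a b
  exact main _ a b rfl
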